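/- Fix an integer d ≥ 3 and x ∈ (0,1). For all y, z with y > 0, z > 0, y + z < 1, yx < (1−x)/2 and zx < (1−x)/2, one has f_d(x,y,z) ≤ h_d(x) = g_d(x, z₀(x)) = f_d(x, z₀(x), z₀(x)). -/

import Mathlib

/-- The function $f_d(x,y,z)$ from the paper. -/
noncomputable def fFun (d : ℕ) (x y z : ℝ) : ℝ :=
  ((d : ℝ) - 1 - d * (y + z) - (1 - y - z) * d / 2) * x * Real.log x
    + ((d : ℝ) - 1) * (1 - x) * Real.log ((1 - x)/2)
    - d * x * y * Real.log y - d * x * z * Real.log z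
    - (1 - y - z) * d * x / 2 * Real.log (1 - y - z)
    - d / 2 * ((1 - x)/2 - y * x) * Real.log ((1 - x)/2 - y * x)
    - d / 2 * ((1 - x)/2 - z * x) * Real.log ((1 - x)/2 - z * x)

/-- The function $g_d(x,z)$ from the paper. -/
noncomputable def gFun (d : ℕ) (x z : ℝ) : ℝ :=
  ((d : ℝ)/2 - 1 - d * z) * x * Real.log x
    + ((d : ℝ) - 1) * (1 - x) * Real.log ((1 - x)/2)
    - 2 * d * x * z * Real.log z
    - (1 - 2*z) * d * x / 2 * Real.log (1 - 2*z)
    - d * ((1 - x)/2 - z * x) * Real.log ((1 - x)/2 - z * x)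

/-- The maximizer $z_0(x) = \frac{1-\sqrt{1-2(1-x)x}}{2x}$. -/
noncomputable def z0 (x : ℝ) : ℝ := (1 - Real.sqrt (1 - 2 * (1 - x) * x)) / (2 * x)

/-- The function $h_d(x) = g_d(x, z_0(x))$. -/
noncomputable def hFun (d : ℕ) (x : ℝ) : ℝ := gFun d x (z0 x)

/- ### Auxiliary lemmas -/

lemma gf_eq (d : ℕ) (x z : ℝ) : fFun d x z z = gFun d x z := by
  simp only [fFun, gFun]
  rw [show (1:ℝ) - z - z = 1 - 2*z from by ring]
  ring

lemma mul_log_midpoint {a b : ℝ} (ha : 0 ≤ a) (hb : 0 ≤ b) :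
    (a+b)/2 * Real.log ((a+b)/2) ≤ (a * Real.log a + b * Real.log b)/2 := by
  have h := Real.convexOn_mul_log.2 (Set.mem_Ici.2 ha) (Set.mem_Ici.2 hb)
    (by norm_num : (0:ℝ) ≤ 1/2) (by norm_num : (0:ℝ) ≤ 1/2) (by norm_num)
  simp only [smul_eq_mul] at h
  have e : (1/2 : ℝ) * a + 1/2 * b = (a+b)/2 := by ring
  rw [e] at h
  linarith

lemma fFun_le_gFun_mid (d : ℕ) (x y z : ℝ) (hx0 : 0 < x) (hy : 0 < y) (hz : 0 < z)
    (hyx : y * x < (1 - x)/2) (hzx : z * x < (1 - x)/2) :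
    fFun d x y z ≤ gFun d x ((y+z)/2) := by
  have I1 : (y+z)/2 * Real.log ((y+z)/2) ≤ (y * Real.log y + z * Real.log z)/2 :=
    mul_log_midpoint hy.le hz.le
  have I2 := mul_log_midpoint (a := (1-x)/2 - y*x) (b := (1-x)/2 - z*x)
    (by linarith) (by linarith)
  rw [show (((1-x)/2 - y*x) + ((1-x)/2 - z*x))/2 = (1-x)/2 - (y+z)/2*x from by ring] at I2
  have key : gFun d x ((y+z)/2) - fFun d x y z
      = 2*(d:ℝ)*x*((y * Real.log y + z * Real.log z)/2 - (y+z)/2 * Real.log ((y+z)/2))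
        + (d:ℝ)*((((1-x)/2 - y*x) * Real.log ((1-x)/2 - y*x)
            + ((1-x)/2 - z*x) * Real.log ((1-x)/2 - z*x))/2
          - ((1-x)/2 - (y+z)/2*x) * Real.log ((1-x)/2 - (y+z)/2*x)) := by
    simp only [fFun, gFun]
    rw [show (1:ℝ) - 2*((y+z)/2) = 1 - y - z from by ring]
    ring
  have hx0' : (0:ℝ) ≤ 2*(d:ℝ)*x := by positivity
  have t1 : (0:ℝ) ≤ 2*(d:ℝ)*x*((y * Real.log y + z * Real.log z)/2
      - (y+z)/2 * Real.log ((y+z)/2)) := mul_nonneg hx0' (by linarith)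
  have t2 : (0:ℝ) ≤ (d:ℝ)*((((1-x)/2 - y*x) * Real.log ((1-x)/2 - y*x)
        + ((1-x)/2 - z*x) * Real.log ((1-x)/2 - z*x))/2
      - ((1-x)/2 - (y+z)/2*x) * Real.log ((1-x)/2 - (y+z)/2*x)) :=
    mul_nonneg (Nat.cast_nonneg d) (by linarith)
  linarith

lemma gFun_hasDerivAt (d : ℕ) (x t : ℝ) (hx0 : 0 < x) (ht : 0 < t) (ht2 : t < 1/2)
    (htx : t * x < (1 - x)/2) :
    HasDerivAt (fun z => gFun d x z)
      ((d:ℝ)*x*(Real.log (1-2*t) + Real.log ((1-x)/2 - t*x)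
        - Real.log x - 2*Real.log t)) t := by
  have hfun : (fun z => gFun d x z)
      = fun z => (((d:ℝ)/2 - 1) * x * Real.log x + ((d:ℝ)-1)*(1-x)*Real.log ((1-x)/2))
        - ((d:ℝ)*x*Real.log x) * z
        - (2*(d:ℝ)*x) * (z * Real.log z)
        - ((d:ℝ)*x/2) * ((1-2*z) * Real.log (1-2*z))
        - (d:ℝ) * (((1-x)/2 - z*x) * Real.log ((1-x)/2 - z*x)) := by
    funext w; simp only [gFun]; ring
  rw [hfun]
  have hw0 : (0:ℝ) < 1 - 2*t := by linarith
  have hu0 : (0:ℝ) < (1-x)/2 - t*x := by linarith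
  have h1 : HasDerivAt (fun z : ℝ => ((d:ℝ)*x*Real.log x) * z) ((d:ℝ)*x*Real.log x * 1) t :=
    (hasDerivAt_id t).const_mul _
  have h2 : HasDerivAt (fun z : ℝ => (2*(d:ℝ)*x) * (z * Real.log z))
      ((2*(d:ℝ)*x) * (Real.log t + 1)) t :=
    (Real.hasDerivAt_mul_log ht.ne').const_mul _
  have hinw : HasDerivAt (fun z : ℝ => 1 - 2*z) (0 - 2*1) t :=
    (hasDerivAt_const t (1:ℝ)).sub ((hasDerivAt_id t).const_mul 2)
  have hmlw : HasDerivAt (fun w : ℝ => w * Real.log w) (Real.log (1-2*t) + 1) (1-2*t) :=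
    Real.hasDerivAt_mul_log hw0.ne'
  have h3' := HasDerivAt.comp t hmlw hinw
  have h3 : HasDerivAt (fun z : ℝ => ((d:ℝ)*x/2) * ((1-2*z) * Real.log (1-2*z)))
      (((d:ℝ)*x/2) * ((Real.log (1-2*t) + 1) * (0 - 2*1))) t := by
    exact (h3'.const_mul _ : _)
  have hinu : HasDerivAt (fun z : ℝ => (1-x)/2 - z*x) (0 - 1*x) t :=
    (hasDerivAt_const t ((1-x)/2)).sub ((hasDerivAt_id t).mul_const x)
  have hmlu : HasDerivAt (fun w : ℝ => w * Real.log w)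
      (Real.log ((1-x)/2 - t*x) + 1) ((1-x)/2 - t*x) := Real.hasDerivAt_mul_log hu0.ne'
  have h4' := HasDerivAt.comp t hmlu hinu
  have h4 : HasDerivAt (fun z : ℝ => (d:ℝ) * (((1-x)/2 - z*x) * Real.log ((1-x)/2 - z*x)))
      ((d:ℝ) * ((Real.log ((1-x)/2 - t*x) + 1) * (0 - 1*x))) t := by
    exact (h4'.const_mul _ : _)
  have total := ((((hasDerivAt_const t
      (((d:ℝ)/2 - 1) * x * Real.log x + ((d:ℝ)-1)*(1-x)*Real.log ((1-x)/2))).sub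
      h1).sub h2).sub h3).sub h4
  exact total.congr_deriv (by ring)

set_option maxHeartbeats 1000000 in
lemma gFun_le_z0 (d : ℕ) (hd : 0 < d) (x : ℝ) (hx0 : 0 < x) (hx1 : x < 1) (z : ℝ)
    (hz : 0 < z) (hz2 : z < 1/2) (hzx : z * x < (1 - x)/2) :
    gFun d x z ≤ gFun d x (z0 x) := by
  set s := Real.sqrt (1 - 2 * (1 - x) * x) with hs
  have hs2 : s^2 = 1 - 2*(1-x)*x := Real.sq_sqrt (by nlinarith)
  have hsnn : 0 ≤ s := Real.sqrt_nonneg _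
  have hsx : x < s := by nlinarith
  have hs1x : 1 - x < s := by nlinarith
  have hs1 : s < 1 := by nlinarith
  have hs0 : 0 < s := lt_of_le_of_lt (le_of_lt hx0) hsx
  have hzz : z0 x = (1 - s)/(2*x) := by rw [z0, hs]
  set w := z0 x with hwdef
  have hw0 : 0 < w := by
    rw [hzz]; apply div_pos (by linarith) (by linarith)
  have h2xw : 2*x*w = 1 - s := by
    rw [hzz]; field_simp
  have hw2 : w < 1/2 := by
    have : 2*x*w < 2*x*(1/2) := by rw [h2xw]; linarith
    exact lt_of_mul_lt_mul_left this (by linarith)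
  have hwx : w*x < (1-x)/2 := by nlinarith [h2xw]
  have hq0 : x*w^2 - w + (1-x)/2 = 0 := by
    rw [hzz]; field_simp; nlinarith [hs2]
  have hdx : (0:ℝ) < (d:ℝ)*x := by
    have : (0:ℝ) < (d:ℝ) := by exact_mod_cast hd
    positivity
  -- sign of the quadratic
  have hqpos : ∀ t : ℝ, 0 < t → t < w → 0 < x*t^2 - t + (1-x)/2 := by
    intro t ht htw
    have hxt : x*t < x*w := mul_lt_mul_of_pos_left htw hx0
    have hlt : x*(t+w) < 1 := by linarith [h2xw, hs0]
    have key : x*t^2 - t + (1-x)/2 = (w-t)*(1-x*(t+w)) + (x*w^2 - w + (1-x)/2) := by ring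
    have hp := mul_pos (sub_pos.2 htw) (sub_pos.2 hlt)
    linarith [key, hq0, hp]
  have hqneg : ∀ t : ℝ, w < t → t*x < (1-x)/2 → x*t^2 - t + (1-x)/2 < 0 := by
    intro t htw htx
    have hlt : x*(t+w) < 1 := by linarith [h2xw, hs0, htx, hx1]
    have key : x*t^2 - t + (1-x)/2 = -((t-w)*(1-x*(t+w))) + (x*w^2 - w + (1-x)/2) := by ring
    have hp := mul_pos (sub_pos.2 htw) (sub_pos.2 hlt)
    linarith [key, hq0, hp]
  -- derivative sign helper
  have hderiv : ∀ t : ℝ, 0 < t → t < 1/2 → t*x < (1-x)/2 →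
      deriv (fun z => gFun d x z) t
        = (d:ℝ)*x*(Real.log (1-2*t) + Real.log ((1-x)/2 - t*x)
            - Real.log x - 2*Real.log t) := fun t h1 h2 h3 =>
    (gFun_hasDerivAt d x t hx0 h1 h2 h3).deriv
  have hlogkey : ∀ t : ℝ, 0 < t → t < 1/2 → t*x < (1-x)/2 →
      (0 < x*t^2 - t + (1-x)/2 →
        0 < Real.log (1-2*t) + Real.log ((1-x)/2 - t*x) - Real.log x - 2*Real.log t) ∧
      (x*t^2 - t + (1-x)/2 < 0 →
        Real.log (1-2*t) + Real.log ((1-x)/2 - t*x) - Real.log x - 2*Real.log t < 0) := by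
    intro t ht ht2 htx
    have hw0' : (0:ℝ) < 1 - 2*t := by linarith
    have hu0' : (0:ℝ) < (1-x)/2 - t*x := by linarith
    have e1 : Real.log (x*(t*t)) = Real.log x + (Real.log t + Real.log t) := by
      rw [Real.log_mul hx0.ne' (by positivity), Real.log_mul ht.ne' ht.ne']
    have e2 : Real.log ((1-2*t)*((1-x)/2 - t*x))
        = Real.log (1-2*t) + Real.log ((1-x)/2 - t*x) :=
      Real.log_mul hw0'.ne' hu0'.ne'
    have keyq : (1-2*t)*((1-x)/2 - t*x) - x*(t*t) = x*t^2 - t + (1-x)/2 := by ring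
    constructor
    · intro hq
      have hlt : x*(t*t) < (1-2*t)*((1-x)/2 - t*x) := by linarith [keyq]
      have := Real.log_lt_log (mul_pos hx0 (mul_pos ht ht)) hlt
      rw [e1, e2] at this; linarith
    · intro hq
      have hlt : (1-2*t)*((1-x)/2 - t*x) < x*(t*t) := by linarith [keyq]
      have := Real.log_lt_log (mul_pos hw0' hu0') hlt
      rw [e1, e2] at this; linarith
  rcases lt_trichotomy z w with hlt | heq | hgt
  · -- increasing on [z, w]
    have hmono : StrictMonoOn (fun z => gFun d x z) (Set.Icc z w) := by
      apply strictMonoOn_of_deriv_pos (convex_Icc z w)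
      · intro t ht
        rcases ht with ⟨ha, hb⟩
        have h1 : 0 < t := lt_of_lt_of_le hz ha
        have h2 : t < 1/2 := lt_of_le_of_lt hb hw2
        have h3 : t*x < (1-x)/2 := by nlinarith [mul_le_mul_of_nonneg_right hb hx0.le]
        exact (gFun_hasDerivAt d x t hx0 h1 h2 h3).continuousAt.continuousWithinAt
      · intro t ht
        rw [interior_Icc] at ht
        rcases ht with ⟨ha, hb⟩
        have h1 : 0 < t := lt_trans hz ha
        have h2 : t < 1/2 := lt_trans hb hw2
        have h3 : t*x < (1-x)/2 := by nlinarith [mul_lt_mul_of_pos_right hb hx0]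
        rw [hderiv t h1 h2 h3]
        exact mul_pos hdx (((hlogkey t h1 h2 h3).1) (hqpos t h1 hb))
    exact (hmono (Set.left_mem_Icc.2 hlt.le) (Set.right_mem_Icc.2 hlt.le) hlt).le
  · rw [heq]
  · -- decreasing on [w, z]
    have hanti : StrictAntiOn (fun z => gFun d x z) (Set.Icc w z) := by
      apply strictAntiOn_of_deriv_neg (convex_Icc w z)
      · intro t ht
        rcases ht with ⟨ha, hb⟩
        have h1 : 0 < t := lt_of_lt_of_le hw0 ha
        have h2 : t < 1/2 := lt_of_le_of_lt hb hz2
        have h3 : t*x < (1-x)/2 := by nlinarith [mul_le_mul_of_nonneg_right hb hx0.le]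
        exact (gFun_hasDerivAt d x t hx0 h1 h2 h3).continuousAt.continuousWithinAt
      · intro t ht
        rw [interior_Icc] at ht
        rcases ht with ⟨ha, hb⟩
        have h1 : 0 < t := lt_trans hw0 ha
        have h2 : t < 1/2 := lt_trans hb hz2
        have h3 : t*x < (1-x)/2 := by nlinarith [mul_lt_mul_of_pos_right hb hx0]
        rw [hderiv t h1 h2 h3]
        have := ((hlogkey t h1 h2 h3).2) (hqneg t ha h3)
        nlinarith
    exact (hanti (Set.left_mem_Icc.2 hgt.le) (Set.right_mem_Icc.2 hgt.le) hgt).le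

/-- Fix an integer $d \ge 3$ and $x \in (0,1)$.  For all $y, z$ with
$y, z > 0$, $y + z < 1$, $yx < (1-x)/2$ and $zx < (1-x)/2$ one has
$f_d(x,y,z) \le h_d(x) = g_d(x,z_0(x)) = f_d(x, z_0(x), z_0(x))$. -/
theorem fFun_le_hFun (d : ℕ) (hd : 3 ≤ d) (x : ℝ) (hx : x ∈ Set.Ioo (0 : ℝ) 1)
    (y z : ℝ) (hy : 0 < y) (hz : 0 < z) (hyz : y + z < 1)
    (hyx : y * x < (1 - x)/2) (hzx : z * x < (1 - x)/2) :
    fFun d x y z ≤ hFun d x ∧ hFun d x = gFun d x (z0 x) ∧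
      gFun d x (z0 x) = fFun d x (z0 x) (z0 x) := by
  obtain ⟨hx0, hx1⟩ := hx
  refine ⟨?_, rfl, (gf_eq d x (z0 x)).symm⟩
  have step1 := fFun_le_gFun_mid d x y z hx0 hy hz hyx hzx
  have hm0 : 0 < (y+z)/2 := by linarith
  have hm2 : (y+z)/2 < 1/2 := by linarith
  have hmx : (y+z)/2 * x < (1-x)/2 := by nlinarith
  have step2 := gFun_le_z0 d (by omega) x hx0 hx1 ((y+z)/2) hm0 hm2 hmx
  calc fFun d x y z ≤ gFun d x ((y+z)/2) := step1
    _ ≤ gFun d x (z0 x) := step2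
    _ = hFun d x := rfl
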